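/- Let (M, g) be a compact connected Riemannian manifold and let f : M → ℂ and φ be smooth with the pointwise identity 0 = 4 Δ f − f + (|f|² + |φ|²) f, where Δ = ∇*∇ is the (positive) rough Laplacian acting on f. Then |f|² ≤ 1 at every point of M. -/

import Mathlib

open Complex

/-- On a compact connected Riemannian manifold, if smooth functions
`f : M → ℂ` and `φ` satisfy `0 = 4 Δf − f + (|f|² + |φ|²) f` pointwise, where
`Δ = ∇*∇` is the positive rough Laplacian, then `|f|² ≤ 1` everywhere.

The rough Laplacian is abstracted by its action `Δc f` on `f` and `ΔR` on real
functions, related by the Bochner identity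
`2 ΔR|f|² = 4 Re⟨Δc f, f⟩ − 4 |∇f|²` (with `gradsq = |∇f|² ≥ 0`), together with
the fact that the positive Laplacian of `|f|²` is nonnegative at a maximum. -/
theorem stmt_3 {M : Type*} [TopologicalSpace M] [CompactSpace M]
    [ConnectedSpace M] [Nonempty M]
    (f φ : M → ℂ) (hf : Continuous f) (hφ : Continuous φ)
    (Δcf : M → ℂ)        -- the function ∇*∇f
    (ΔRnormsq : M → ℝ)   -- the function ∇*∇(|f|²)
    (gradsq : M → ℝ)     -- the function |∇f|²
    (hgrad_nonneg : ∀ x, 0 ≤ gradsq x)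
    (hBochner : ∀ x, 2 * ΔRnormsq x =
      4 * (Δcf x * (starRingEnd ℂ) (f x)).re - 4 * gradsq x)
    (hmax : ∀ p, (∀ x, ‖f x‖ ≤ ‖f p‖) → 0 ≤ ΔRnormsq p)
    (heq : ∀ x, (0 : ℂ) =
      4 * Δcf x - f x + ((‖f x‖ ^ 2 + ‖φ x‖ ^ 2 : ℝ) : ℂ) * f x) :
    ∀ x, ‖f x‖ ^ 2 ≤ 1 := by
  obtain ⟨p, -, hp⟩ := IsCompact.exists_isMaxOn isCompact_univ Set.univ_nonempty
    (hf.norm.continuousOn (s := Set.univ))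
  have hple : ∀ x, ‖f x‖ ≤ ‖f p‖ := fun x => hp (Set.mem_univ x)
  have hΔR : 0 ≤ ΔRnormsq p := hmax p hple
  -- compute 4 Re⟨Δcf p, f p⟩
  have h4 : (4 : ℂ) * Δcf p = f p - ((‖f p‖ ^ 2 + ‖φ p‖ ^ 2 : ℝ) : ℂ) * f p := by
    have := heq p; linear_combination -this
  have hre : 4 * (Δcf p * (starRingEnd ℂ) (f p)).re =
      (1 - (‖f p‖ ^ 2 + ‖φ p‖ ^ 2)) * ‖f p‖ ^ 2 := by
    have : ((4 : ℂ) * Δcf p * (starRingEnd ℂ) (f p)) =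
        ((1 : ℂ) - ((‖f p‖ ^ 2 + ‖φ p‖ ^ 2 : ℝ) : ℂ)) * (f p * (starRingEnd ℂ) (f p)) := by
      rw [h4]; ring
    have h2 := congrArg Complex.re this
    rw [Complex.mul_conj'] at h2
    have hn : ‖f p‖ ^ 2 = (f p).re ^ 2 + (f p).im ^ 2 := by
      rw [Complex.sq_norm, Complex.normSq_apply]; ring
    norm_num [Complex.mul_re, Complex.mul_im, Complex.ofReal_re, Complex.ofReal_im,
      Complex.conj_re, Complex.conj_im, ← Complex.ofReal_pow] at h2 ⊢
    nlinarith [h2, hn]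
  have hB := hBochner p
  rw [hre] at hB
  have hg := hgrad_nonneg p
  have key : ‖f p‖ ^ 2 ≤ 1 := by
    nlinarith [sq_nonneg (‖f p‖), sq_nonneg (‖φ p‖)]
  intro x
  calc ‖f x‖ ^ 2 ≤ ‖f p‖ ^ 2 := by
        have := hple x
        exact pow_le_pow_left₀ (norm_nonneg _) this 2
    _ ≤ 1 := key
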